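/- Let s : X → Y be a continuous open map between compact Hausdorff topological spaces. Then the function n : Y → ℕ ∪ {∞} defined by n(y) = #(s⁻¹({y})) (the cardinality of the fiber over y) is lower semicontinuous on Y, i.e. for every m the set {y ∈ Y : n(y) ≥ m} is open. -/

import Mathlib

/-- If `s : X → Y` is a continuous open map between compact Hausdorff spaces, then the fiber
cardinality function `n(y) = #(s⁻¹{y})`, with values in `ℕ∞ = ℕ ∪ {∞}`, is lower
semicontinuous on `Y`. -/
theorem fiber_card_lowerSemicontinuous {X Y : Type*}
    [TopologicalSpace X] [CompactSpace X] [T2Space X]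
    [TopologicalSpace Y] [CompactSpace Y] [T2Space Y]
    (s : X → Y) (hs_cont : Continuous s) (hs_open : IsOpenMap s) :
    LowerSemicontinuous (fun y : Y => (s ⁻¹' {y}).encard) := by
  classical
  intro y c hc
  have hc_ne : c ≠ ⊤ := hc.ne_top
  have h1 : c + 1 ≤ (s ⁻¹' {y}).encard := Order.add_one_le_of_lt hc
  obtain ⟨t, hts, htc⟩ := Set.exists_subset_encard_eq h1
  have htfin : t.Finite := Set.encard_ne_top_iff.mp (by
    rw [htc]
    exact WithTop.add_ne_top.mpr ⟨hc_ne, ENat.one_ne_top⟩)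
  obtain ⟨U, hU, hUd⟩ := htfin.t2_separation
  have hVopen : IsOpen (⋂ x ∈ t, s '' U x) :=
    htfin.isOpen_biInter (fun x _ => hs_open _ (hU x).2)
  have hyV : y ∈ ⋂ x ∈ t, s '' U x := by
    refine Set.mem_iInter₂.2 fun x hx => ⟨x, (hU x).1, ?_⟩
    simpa using hts hx
  filter_upwards [hVopen.mem_nhds hyV] with y' hy'
  have hchoice : ∀ x ∈ t, ∃ z, z ∈ U x ∧ s z = y' := by
    intro x hx
    obtain ⟨z, hz, hz'⟩ := Set.mem_iInter₂.1 hy' x hx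
    exact ⟨z, hz, hz'⟩
  choose g hg1 hg2 using hchoice
  set f : X → X := fun x => if h : x ∈ t then g x h else x with hf
  have hinj : Set.InjOn f t := by
    intro a ha b hb hab
    by_contra hne
    simp only [f, dif_pos ha, dif_pos hb] at hab
    exact (Set.disjoint_left.1 (hUd ha hb hne)) (hg1 a ha) (hab ▸ hg1 b hb)
  have hsub : f '' t ⊆ s ⁻¹' {y'} := by
    rintro _ ⟨x, hx, rfl⟩
    simp [f, dif_pos hx, hg2 x hx]
  have hlt : c < c + 1 := by
    lift c to ℕ using hc_ne
    exact_mod_cast Nat.lt_succ_self c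
  calc c < c + 1 := hlt
    _ = (f '' t).encard := by rw [hinj.encard_image, htc]
    _ ≤ (s ⁻¹' {y'}).encard := Set.encard_le_encard hsub
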